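/- Let T be an (r × c, v)-near triple array with 2 ≤ r, 2 ≤ c, 2 ≤ v and max(r,c) ≤ v ≤ rc, with parameters e = rc/v and λ_cc, and let μ_c := e(r − 1)/(v − 1). Then S(c(c−1)/2, λ_cc) ≥ S(v(v−1)/2, μ_c), and equality holds if and only if for every pair of distinct symbols a, b, the number of columns of T containing both a and b is ⌊μ_c⌋ or ⌈μ_c⌉. -/

import Mathlib

open Finset

/-- An `r × c` row-column design on `v` symbols is binary if no symbol occurs
twice in any row or in any column. -/
def IsBinaryDesign {r c v : ℕ} (T : Fin r × Fin c → Fin v) : Prop :=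
  (∀ (i : Fin r) (j j' : Fin c), j ≠ j' → T (i, j) ≠ T (i, j')) ∧
  (∀ (j : Fin c) (i i' : Fin r), i ≠ i' → T (i, j) ≠ T (i', j))

/-- The replication number of a symbol `s`: the number of cells containing `s`. -/
def replNum {r c v : ℕ} (T : Fin r × Fin c → Fin v) (s : Fin v) : ℕ :=
  (Finset.univ.filter (fun p : Fin r × Fin c => T p = s)).card

/-- The average replication number `e = rc/v` as a rational number. -/
def avgRepl (r c v : ℕ) : ℚ := ((r : ℚ) * (c : ℚ)) / (v : ℚ)

/-- A design is equireplicate if `e = rc/v` is an integer and every symbol has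
replication number `e`. -/
def IsEquireplicate {r c v : ℕ} (T : Fin r × Fin c → Fin v) : Prop :=
  (avgRepl r c v).den = 1 ∧ ∀ s : Fin v, (replNum T s : ℚ) = avgRepl r c v

/-- A design is near equireplicate if `e = rc/v` is not an integer and every symbol
has replication number `⌊e⌋` or `⌈e⌉`. -/
def IsNearEquireplicate {r c v : ℕ} (T : Fin r × Fin c → Fin v) : Prop :=
  (avgRepl r c v).den ≠ 1 ∧
  ∀ s : Fin v, (replNum T s : ℤ) = ⌊avgRepl r c v⌋ ∨ (replNum T s : ℤ) = ⌈avgRepl r c v⌉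

/-- The set of symbols occurring in row `i`. -/
def rowSet {r c v : ℕ} (T : Fin r × Fin c → Fin v) (i : Fin r) : Finset (Fin v) :=
  Finset.univ.image (fun j : Fin c => T (i, j))

/-- The set of symbols occurring in column `j`. -/
def colSet {r c v : ℕ} (T : Fin r × Fin c → Fin v) (j : Fin c) : Finset (Fin v) :=
  Finset.univ.image (fun i : Fin r => T (i, j))

/-- Average row-column intersection size `λ_rc`. -/
def lamRC {r c v : ℕ} (T : Fin r × Fin c → Fin v) : ℚ :=
  (∑ i : Fin r, ∑ j : Fin c, ((rowSet T i ∩ colSet T j).card : ℚ)) / ((r : ℚ) * (c : ℚ))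

/-- Average row-row intersection size `λ_rr`. -/
def lamRR {r c v : ℕ} (T : Fin r × Fin c → Fin v) : ℚ :=
  (∑ p ∈ Finset.univ.filter (fun p : Fin r × Fin r => p.1 < p.2),
      ((rowSet T p.1 ∩ rowSet T p.2).card : ℚ)) / ((r : ℚ) * ((r : ℚ) - 1) / 2)

/-- Average column-column intersection size `λ_cc`. -/
def lamCC {r c v : ℕ} (T : Fin r × Fin c → Fin v) : ℚ :=
  (∑ p ∈ Finset.univ.filter (fun p : Fin c × Fin c => p.1 < p.2),
      ((colSet T p.1 ∩ colSet T p.2).card : ℚ)) / ((c : ℚ) * ((c : ℚ) - 1) / 2)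

/-- An `(r × c, v)`-near triple array. -/
def IsNearTripleArray {r c v : ℕ} (T : Fin r × Fin c → Fin v) : Prop :=
  IsBinaryDesign T ∧ (IsEquireplicate T ∨ IsNearEquireplicate T) ∧
  (∀ (i : Fin r) (j : Fin c),
    ((rowSet T i ∩ colSet T j).card : ℤ) = ⌊lamRC T⌋ ∨
    ((rowSet T i ∩ colSet T j).card : ℤ) = ⌈lamRC T⌉) ∧
  (∀ i j : Fin r, i ≠ j →
    ((rowSet T i ∩ rowSet T j).card : ℤ) = ⌊lamRR T⌋ ∨
    ((rowSet T i ∩ rowSet T j).card : ℤ) = ⌈lamRR T⌉) ∧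
  (∀ i j : Fin c, i ≠ j →
    ((colSet T i ∩ colSet T j).card : ℤ) = ⌊lamCC T⌋ ∨
    ((colSet T i ∩ colSet T j).card : ℤ) = ⌈lamCC T⌉)

/-- `S(n, m) = n·m(m−1)/2 + n·(m − ⌊m⌋)(⌈m⌉ − m)/2`. -/
def Sfun (n : ℕ) (m : ℚ) : ℚ :=
  (n : ℚ) * (m * (m - 1)) / 2 + (n : ℚ) * ((m - (⌊m⌋ : ℚ)) * ((⌈m⌉ : ℚ) - m)) / 2

/-- The number of rows containing both symbols `a` and `b`. -/
def rowPairCount {r c v : ℕ} (T : Fin r × Fin c → Fin v) (a b : Fin v) : ℕ :=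
  (Finset.univ.filter (fun i : Fin r => a ∈ rowSet T i ∧ b ∈ rowSet T i)).card

/-- The number of columns containing both symbols `a` and `b`. -/
def colPairCount {r c v : ℕ} (T : Fin r × Fin c → Fin v) (a b : Fin v) : ℕ :=
  (Finset.univ.filter (fun j : Fin c => a ∈ colSet T j ∧ b ∈ colSet T j)).card

/-- The average covering number `μ = e(r + c − 2)/(v − 1)`. -/
def muGrid (r c v : ℕ) : ℚ :=
  avgRepl r c v * ((r : ℚ) + (c : ℚ) - 2) / ((v : ℚ) - 1)

-- helpers

lemma intQ (m : ℚ) (z : ℤ) : 0 ≤ (z - ⌊m⌋) * (z - ⌈m⌉) ∧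
    ((z - ⌊m⌋) * (z - ⌈m⌉) = 0 ↔ z = ⌊m⌋ ∨ z = ⌈m⌉) := by
  have h1 : ⌈m⌉ ≤ ⌊m⌋ + 1 := Int.ceil_le_floor_add_one m
  have h2 : ⌊m⌋ ≤ ⌈m⌉ := Int.floor_le_ceil m
  constructor
  · rcases le_or_gt z ⌊m⌋ with h | h
    · have := mul_nonneg (by omega : (0:ℤ) ≤ ⌊m⌋ - z) (by omega : (0:ℤ) ≤ ⌈m⌉ - z)
      nlinarith
    · exact mul_nonneg (by omega) (by omega)
  · rw [mul_eq_zero, sub_eq_zero, sub_eq_zero]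

lemma Slemma {α : Type*} (P : Finset α) (g : α → ℕ) (m : ℚ)
    (hsum : ∑ p ∈ P, (g p : ℚ) = (P.card : ℚ) * m) :
    Sfun P.card m ≤ ∑ p ∈ P, ((g p : ℚ) * ((g p : ℚ) - 1) / 2) ∧
    ((∑ p ∈ P, ((g p : ℚ) * ((g p : ℚ) - 1) / 2) = Sfun P.card m) ↔
      ∀ p ∈ P, (g p : ℤ) = ⌊m⌋ ∨ (g p : ℤ) = ⌈m⌉) := by
  set a : ℚ := (⌊m⌋ : ℚ) with ha
  set b : ℚ := (⌈m⌉ : ℚ) with hb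
  have key : ∀ p ∈ P, (g p : ℚ) * ((g p : ℚ) - 1) / 2
      = ((g p : ℚ) - a) * ((g p : ℚ) - b) / 2 + ((g p : ℚ) * (a + b - 1) - a * b) / 2 := by
    intro p _; ring
  have hQ : ∀ p ∈ P, ((g p : ℚ) - a) * ((g p : ℚ) - b)
      = (((g p : ℤ) - ⌊m⌋) * ((g p : ℤ) - ⌈m⌉) : ℤ) := by
    intro p _; push_cast; ring
  have hsplit : ∑ p ∈ P, ((g p : ℚ) * ((g p : ℚ) - 1) / 2)
      = (∑ p ∈ P, ((g p : ℚ) - a) * ((g p : ℚ) - b) / 2) + Sfun P.card m := by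
    rw [Finset.sum_congr rfl key, Finset.sum_add_distrib]
    congr 1
    have : ∑ p ∈ P, ((g p : ℚ) * (a + b - 1) - a * b) / 2
        = ((∑ p ∈ P, (g p : ℚ)) * (a + b - 1) - (P.card : ℚ) * (a * b)) / 2 := by
      rw [← Finset.sum_div]
      congr 1
      rw [Finset.sum_sub_distrib, ← Finset.sum_mul, Finset.sum_const, nsmul_eq_mul]
    rw [this, hsum]
    unfold Sfun
    ring
  have hnn : ∀ p ∈ P, 0 ≤ ((g p : ℚ) - a) * ((g p : ℚ) - b) / 2 := by
    intro p hp
    rw [hQ p hp]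
    have := (intQ m (g p)).1
    positivity
  constructor
  · rw [hsplit]
    have : 0 ≤ ∑ p ∈ P, ((g p : ℚ) - a) * ((g p : ℚ) - b) / 2 := Finset.sum_nonneg hnn
    linarith
  · rw [hsplit]
    constructor
    · intro h
      have h0 : ∑ p ∈ P, ((g p : ℚ) - a) * ((g p : ℚ) - b) / 2 = 0 := by linarith
      rw [Finset.sum_eq_zero_iff_of_nonneg hnn] at h0
      intro p hp
      have := h0 p hp
      rw [hQ p hp] at this
      have : (((g p : ℤ) - ⌊m⌋) * ((g p : ℤ) - ⌈m⌉) : ℤ) = 0 := by exact_mod_cast (by linarith : ((((g p : ℤ) - ⌊m⌋) * ((g p : ℤ) - ⌈m⌉) : ℤ) : ℚ) = 0)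
      exact (intQ m (g p)).2.mp this
    · intro h
      have h0 : ∑ p ∈ P, ((g p : ℚ) - a) * ((g p : ℚ) - b) / 2 = 0 := by
        apply Finset.sum_eq_zero
        intro p hp
        rw [hQ p hp]
        have := (intQ m (g p)).2.mpr (h p hp)
        rw [this]; norm_num
      rw [h0]; ring

lemma pair_swap_sum {n : ℕ} (h : Fin n → Fin n → ℚ) :
    ∑ p ∈ Finset.univ.filter (fun p : Fin n × Fin n => p.2 < p.1), h p.1 p.2
    = ∑ p ∈ Finset.univ.filter (fun p : Fin n × Fin n => p.1 < p.2), h p.2 p.1 := by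
  apply Finset.sum_bij' (fun p _ => Prod.swap p) (fun p _ => Prod.swap p)
  · intro p hp; simp at hp ⊢; exact hp
  · intro p hp; simp at hp ⊢; exact hp
  · intro p _; simp
  · intro p _; simp
  · intro p _; simp

lemma pair_split {n : ℕ} (h : Fin n → Fin n → ℚ) (hsym : ∀ i j, h i j = h j i) :
    ∑ p ∈ Finset.univ.filter (fun p : Fin n × Fin n => p.1 ≠ p.2), h p.1 p.2
    = 2 * ∑ p ∈ Finset.univ.filter (fun p : Fin n × Fin n => p.1 < p.2), h p.1 p.2 := by
  have hun : Finset.univ.filter (fun p : Fin n × Fin n => p.1 ≠ p.2)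
      = Finset.univ.filter (fun p : Fin n × Fin n => p.1 < p.2)
        ∪ Finset.univ.filter (fun p : Fin n × Fin n => p.2 < p.1) := by
    rw [← Finset.filter_or]
    apply Finset.filter_congr
    intro p _
    exact ne_iff_lt_or_gt
  have hdisj : Disjoint (Finset.univ.filter (fun p : Fin n × Fin n => p.1 < p.2))
      (Finset.univ.filter (fun p : Fin n × Fin n => p.2 < p.1)) := by
    rw [Finset.disjoint_left]
    intro p hp1 hp2
    simp only [Finset.mem_filter] at hp1 hp2
    exact lt_asymm hp1.2 hp2.2
  rw [hun, Finset.sum_union hdisj, pair_swap_sum,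
    show (∑ p ∈ Finset.univ.filter (fun p : Fin n × Fin n => p.1 < p.2), h p.2 p.1)
      = ∑ p ∈ Finset.univ.filter (fun p : Fin n × Fin n => p.1 < p.2), h p.1 p.2 from
      Finset.sum_congr rfl (fun p _ => hsym p.2 p.1)]
  ring

lemma pair_card {n : ℕ} :
    (Finset.univ.filter (fun p : Fin n × Fin n => p.1 < p.2)).card = n * (n - 1) / 2 := by
  have h1 : (Finset.univ.filter (fun p : Fin n × Fin n => p.1 ≠ p.2)).card = n * n - n := by
    have : Finset.univ.filter (fun p : Fin n × Fin n => p.1 ≠ p.2)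
        = (Finset.univ : Finset (Fin n)).offDiag := by
      ext p; simp
    rw [this, Finset.offDiag_card]
    simp
  have h2 : ((Finset.univ.filter (fun p : Fin n × Fin n => p.1 ≠ p.2)).card : ℚ)
      = 2 * ((Finset.univ.filter (fun p : Fin n × Fin n => p.1 < p.2)).card : ℚ) := by
    simpa using pair_split (fun _ _ => (1 : ℚ)) (fun _ _ => rfl)
  have h3 : (n * n - n : ℕ) = 2 * (Finset.univ.filter (fun p : Fin n × Fin n => p.1 < p.2)).card := by
    have : ((n * n - n : ℕ) : ℚ) = ((2 * (Finset.univ.filter (fun p : Fin n × Fin n => p.1 < p.2)).card : ℕ) : ℚ) := by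
      rw [← h1]; push_cast; linarith [h2]
    exact_mod_cast this
  have h4 : n * (n - 1) = 2 * (Finset.univ.filter (fun p : Fin n × Fin n => p.1 < p.2)).card := by
    rcases Nat.eq_zero_or_pos n with h | h
    · subst h; simpa using h3
    · calc n * (n - 1) = n * n - n := by cases n with
            | zero => simp
            | succ k => simp [Nat.succ_sub_one]; ring_nf; omega
        _ = _ := h3
  rw [h4]
  omega

lemma card_inter_eq_sum {v : ℕ} (s t : Finset (Fin v)) :
    ((s ∩ t).card : ℚ) = ∑ a : Fin v, (if a ∈ s then (1 : ℚ) else 0) * (if a ∈ t then 1 else 0) := by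
  have h : ∀ a : Fin v, (if a ∈ s then (1 : ℚ) else 0) * (if a ∈ t then 1 else 0)
      = if a ∈ s ∩ t then 1 else 0 := by
    intro a
    by_cases h1 : a ∈ s <;> by_cases h2 : a ∈ t <;> simp [h1, h2]
  rw [Finset.sum_congr rfl (fun a _ => h a), Finset.sum_boole, Finset.filter_univ_mem]

lemma sum_swap4 {α β : Type*} [Fintype α] [Fintype β] (g : α → α → β → β → ℚ) :
    ∑ i : α, ∑ j : α, ∑ a : β, ∑ b : β, g i j a b
    = ∑ a : β, ∑ b : β, ∑ i : α, ∑ j : α, g i j a b := by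
  rw [Finset.sum_congr rfl (fun i _ => (Finset.sum_comm : (∑ j : α, ∑ a : β, ∑ b : β, g i j a b) = _)),
    Finset.sum_comm]
  refine Finset.sum_congr rfl fun a _ => ?_
  rw [Finset.sum_congr rfl (fun i _ => (Finset.sum_comm : (∑ j : α, ∑ b : β, g i j a b) = _)),
    Finset.sum_comm]

lemma fourfold {α β : Type*} [Fintype α] [Fintype β] (f : α → β → ℚ) :
    ∑ i : α, ∑ j : α, (∑ a : β, f i a * f j a) * (∑ b : β, f i b * f j b)
    = ∑ a : β, ∑ b : β, (∑ i : α, f i a * f i b) * (∑ j : α, f j a * f j b) := by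
  simp only [Finset.sum_mul_sum]
  rw [sum_swap4 (fun i j a b => f i a * f j a * (f i b * f j b))]
  exact Finset.sum_congr rfl fun a _ => Finset.sum_congr rfl fun b _ =>
    Finset.sum_congr rfl fun i _ => Finset.sum_congr rfl fun j _ => by ring

lemma twofold {α β : Type*} [Fintype α] [Fintype β] (f : α → β → ℚ) :
    ∑ i : α, ∑ j : α, ∑ a : β, f i a * f j a
    = ∑ a : β, (∑ i : α, f i a) * (∑ j : α, f j a) := by
  simp only [Finset.sum_mul_sum]
  rw [Finset.sum_congr rfl (fun i _ => (Finset.sum_comm : (∑ j : α, ∑ a : β, f i a * f j a) = _)),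
    Finset.sum_comm]

lemma split_diag {n : ℕ} (h : Fin n → Fin n → ℚ) :
    ∑ i : Fin n, ∑ j : Fin n, h i j
    = (∑ i : Fin n, h i i)
      + ∑ p ∈ Finset.univ.filter (fun p : Fin n × Fin n => p.1 ≠ p.2), h p.1 p.2 := by
  rw [← Fintype.sum_prod_type (f := fun p : Fin n × Fin n => h p.1 p.2),
    ← Finset.sum_filter_add_sum_filter_not Finset.univ (fun p : Fin n × Fin n => p.1 = p.2)
      (fun p => h p.1 p.2)]
  congr 1
  apply Finset.sum_bij' (fun p (_ : p ∈ Finset.univ.filter (fun p : Fin n × Fin n => p.1 = p.2)) => p.1)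
    (fun i (_ : i ∈ Finset.univ) => ((i, i) : Fin n × Fin n))
  · intro p hp; simp
  · intro i hi; simp
  · intro p hp; simp only [Finset.mem_filter] at hp
    exact Prod.ext rfl hp.2
  · intro i hi; rfl
  · intro p hp; simp only [Finset.mem_filter] at hp
    rw [← hp.2]

section Design
variable {r c v : ℕ} (T : Fin r × Fin c → Fin v)

lemma colPairCount_eq_sum (a b : Fin v) :
    (colPairCount T a b : ℚ)
    = ∑ j : Fin c, (if a ∈ colSet T j then (1 : ℚ) else 0) * (if b ∈ colSet T j then 1 else 0) := by
  have h : ∀ j : Fin c, (if a ∈ colSet T j then (1 : ℚ) else 0) * (if b ∈ colSet T j then 1 else 0)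
      = if a ∈ colSet T j ∧ b ∈ colSet T j then 1 else 0 := by
    intro j
    by_cases h1 : a ∈ colSet T j <;> by_cases h2 : b ∈ colSet T j <;> simp [h1, h2]
  rw [Finset.sum_congr rfl (fun j _ => h j), Finset.sum_boole, colPairCount]

lemma colPairCount_symm (a b : Fin v) : colPairCount T a b = colPairCount T b a := by
  unfold colPairCount
  congr 1
  apply Finset.filter_congr
  intro j _
  exact and_comm

lemma colSet_card (hb : IsBinaryDesign T) (j : Fin c) : (colSet T j).card = r := by
  rw [colSet, Finset.card_image_of_injective _ ?_, Finset.card_univ, Fintype.card_fin]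
  intro x y hxy
  by_contra hne
  exact hb.2 j x y hne hxy

lemma row_sum_one (hb : IsBinaryDesign T) (j : Fin c) :
    ∑ a : Fin v, (if a ∈ colSet T j then (1 : ℚ) else 0) = (r : ℚ) := by
  rw [Finset.sum_boole, Finset.filter_univ_mem, colSet_card T hb]

/-- The central double-counting identity. -/
lemma bigE (hb : IsBinaryDesign T) :
    ∑ p ∈ Finset.univ.filter (fun p : Fin c × Fin c => p.1 < p.2),
      ((colSet T p.1 ∩ colSet T p.2).card : ℚ)
        * (((colSet T p.1 ∩ colSet T p.2).card : ℚ) - 1)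
    = ∑ q ∈ Finset.univ.filter (fun q : Fin v × Fin v => q.1 < q.2),
      (colPairCount T q.1 q.2 : ℚ) * ((colPairCount T q.1 q.2 : ℚ) - 1) := by
  set χ : Fin c → Fin v → ℚ := fun j a => if a ∈ colSet T j then (1 : ℚ) else 0 with hχ
  have hK : ∀ i j : Fin c, ((colSet T i ∩ colSet T j).card : ℚ) = ∑ a : Fin v, χ i a * χ j a :=
    fun i j => card_inter_eq_sum _ _
  have hL : ∀ a b : Fin v, (colPairCount T a b : ℚ) = ∑ j : Fin c, χ j a * χ j b :=
    fun a b => colPairCount_eq_sum T a b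
  have hid : ∀ j a, χ j a * χ j a = χ j a := by
    intro j a; by_cases h : a ∈ colSet T j <;> simp [hχ, h]
  have hrw : ∀ j, ∑ a : Fin v, χ j a = (r : ℚ) := fun j => row_sum_one T hb j
  -- diagonal values
  have hKd : ∀ i : Fin c, ((colSet T i ∩ colSet T i).card : ℚ) = (r : ℚ) := by
    intro i; rw [hK, Finset.sum_congr rfl (fun a _ => hid i a), hrw]
  have hLd : ∀ a : Fin v, (colPairCount T a a : ℚ) = ∑ j : Fin c, χ j a := by
    intro a; rw [hL, Finset.sum_congr rfl (fun j _ => hid j a)]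
  have hM : ∑ a : Fin v, ∑ j : Fin c, χ j a = (c : ℚ) * (r : ℚ) := by
    rw [Finset.sum_comm, Finset.sum_congr rfl (fun j _ => hrw j), Finset.sum_const,
      Finset.card_univ, Fintype.card_fin, nsmul_eq_mul]
  -- global identities
  have C1 : ∑ i : Fin c, ∑ j : Fin c,
        ((colSet T i ∩ colSet T j).card : ℚ) * ((colSet T i ∩ colSet T j).card : ℚ)
      = ∑ a : Fin v, ∑ b : Fin v,
        (colPairCount T a b : ℚ) * (colPairCount T a b : ℚ) := by
    simp only [hK, hL]; exact fourfold χ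
  have C2 : ∑ i : Fin c, ∑ j : Fin c, ((colSet T i ∩ colSet T j).card : ℚ)
      = ∑ a : Fin v, (∑ i : Fin c, χ i a) * (∑ j : Fin c, χ j a) := by
    simp only [hK]; exact twofold χ
  have C3 : ∑ a : Fin v, ∑ b : Fin v, (colPairCount T a b : ℚ)
      = (c : ℚ) * ((r : ℚ) * (r : ℚ)) := by
    simp only [hL]
    rw [twofold (fun (a : Fin v) (j : Fin c) => χ j a)]
    rw [Finset.sum_congr rfl (fun j (_ : j ∈ Finset.univ) => by rw [hrw j])]
    rw [Finset.sum_const, Finset.card_univ, Fintype.card_fin, nsmul_eq_mul]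
  -- squares of diagonals
  have D1 : ∑ i : Fin c, ((colSet T i ∩ colSet T i).card : ℚ) * ((colSet T i ∩ colSet T i).card : ℚ)
      = (c : ℚ) * ((r : ℚ) * (r : ℚ)) := by
    rw [Finset.sum_congr rfl (fun i _ => by rw [hKd i]), Finset.sum_const, Finset.card_univ,
      Fintype.card_fin, nsmul_eq_mul]
  have D2 : ∑ i : Fin c, ((colSet T i ∩ colSet T i).card : ℚ) = (c : ℚ) * (r : ℚ) := by
    rw [Finset.sum_congr rfl (fun i _ => by rw [hKd i]), Finset.sum_const, Finset.card_univ,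
      Fintype.card_fin, nsmul_eq_mul]
  have D3 : ∑ a : Fin v, (colPairCount T a a : ℚ) * (colPairCount T a a : ℚ)
      = ∑ a : Fin v, (∑ i : Fin c, χ i a) * (∑ j : Fin c, χ j a) := by
    exact Finset.sum_congr rfl (fun a _ => by rw [hLd a])
  have D4 : ∑ a : Fin v, (colPairCount T a a : ℚ) = (c : ℚ) * (r : ℚ) := by
    rw [Finset.sum_congr rfl (fun a _ => by rw [hLd a])]; exact hM
  -- split into diagonal + offdiagonal
  have S1 := split_diag (fun i j : Fin c =>
    ((colSet T i ∩ colSet T j).card : ℚ) * ((colSet T i ∩ colSet T j).card : ℚ))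
  have S2 := split_diag (fun i j : Fin c => ((colSet T i ∩ colSet T j).card : ℚ))
  have S3 := split_diag (fun a b : Fin v =>
    (colPairCount T a b : ℚ) * (colPairCount T a b : ℚ))
  have S4 := split_diag (fun a b : Fin v => (colPairCount T a b : ℚ))
  -- off-diagonal identity
  have E1 : ∑ p ∈ Finset.univ.filter (fun p : Fin c × Fin c => p.1 ≠ p.2),
        ((colSet T p.1 ∩ colSet T p.2).card : ℚ)
          * (((colSet T p.1 ∩ colSet T p.2).card : ℚ) - 1)
      = ∑ q ∈ Finset.univ.filter (fun q : Fin v × Fin v => q.1 ≠ q.2),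
        (colPairCount T q.1 q.2 : ℚ) * ((colPairCount T q.1 q.2 : ℚ) - 1) := by
    have e1 : ∀ x : ℚ, x * (x - 1) = x * x - x := fun x => by ring
    rw [Finset.sum_congr rfl (fun p _ => e1 _), Finset.sum_congr rfl (fun q _ => e1 _),
      Finset.sum_sub_distrib, Finset.sum_sub_distrib]
    have g1 : ∑ p ∈ Finset.univ.filter (fun p : Fin c × Fin c => p.1 ≠ p.2),
        ((colSet T p.1 ∩ colSet T p.2).card : ℚ) * ((colSet T p.1 ∩ colSet T p.2).card : ℚ)
        = (∑ a : Fin v, ∑ b : Fin v, (colPairCount T a b : ℚ) * (colPairCount T a b : ℚ))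
          - (c : ℚ) * ((r : ℚ) * (r : ℚ)) := by
      rw [← C1]; linarith [S1, D1]
    have g2 : ∑ p ∈ Finset.univ.filter (fun p : Fin c × Fin c => p.1 ≠ p.2),
        ((colSet T p.1 ∩ colSet T p.2).card : ℚ)
        = (∑ a : Fin v, (∑ i : Fin c, χ i a) * (∑ j : Fin c, χ j a)) - (c : ℚ) * (r : ℚ) := by
      rw [← C2]; linarith [S2, D2]
    have g3 : ∑ q ∈ Finset.univ.filter (fun q : Fin v × Fin v => q.1 ≠ q.2),
        (colPairCount T q.1 q.2 : ℚ) * (colPairCount T q.1 q.2 : ℚ)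
        = (∑ a : Fin v, ∑ b : Fin v, (colPairCount T a b : ℚ) * (colPairCount T a b : ℚ))
          - (∑ a : Fin v, (∑ i : Fin c, χ i a) * (∑ j : Fin c, χ j a)) := by
      rw [← D3]; linarith [S3]
    have g4 : ∑ q ∈ Finset.univ.filter (fun q : Fin v × Fin v => q.1 ≠ q.2),
        (colPairCount T q.1 q.2 : ℚ)
        = (c : ℚ) * ((r : ℚ) * (r : ℚ)) - (c : ℚ) * (r : ℚ) := by
      linarith [S4, C3, D4]
    rw [g1, g2, g3, g4]
    ring
  -- halve
  have P1 := pair_split (fun i j : Fin c =>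
    ((colSet T i ∩ colSet T j).card : ℚ) * (((colSet T i ∩ colSet T j).card : ℚ) - 1))
    (fun i j => by simp only [Finset.inter_comm (colSet T i) (colSet T j)])
  have P2 := pair_split (fun a b : Fin v =>
    (colPairCount T a b : ℚ) * ((colPairCount T a b : ℚ) - 1))
    (fun a b => by simp only [colPairCount_symm T a b])
  rw [P1, P2] at E1
  linarith

/-- Total of colPairCount over ordered-< symbol pairs. -/
lemma bigSum (hb : IsBinaryDesign T) :
    ∑ q ∈ Finset.univ.filter (fun q : Fin v × Fin v => q.1 < q.2), (colPairCount T q.1 q.2 : ℚ)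
    = (c : ℚ) * (r : ℚ) * ((r : ℚ) - 1) / 2 := by
  set χ : Fin c → Fin v → ℚ := fun j a => if a ∈ colSet T j then (1 : ℚ) else 0 with hχ
  have hL : ∀ a b : Fin v, (colPairCount T a b : ℚ) = ∑ j : Fin c, χ j a * χ j b :=
    fun a b => colPairCount_eq_sum T a b
  have hid : ∀ j a, χ j a * χ j a = χ j a := by
    intro j a; by_cases h : a ∈ colSet T j <;> simp [hχ, h]
  have hrw : ∀ j, ∑ a : Fin v, χ j a = (r : ℚ) := fun j => row_sum_one T hb j
  have hM : ∑ a : Fin v, ∑ j : Fin c, χ j a = (c : ℚ) * (r : ℚ) := by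
    rw [Finset.sum_comm, Finset.sum_congr rfl (fun j _ => hrw j), Finset.sum_const,
      Finset.card_univ, Fintype.card_fin, nsmul_eq_mul]
  have C3 : ∑ a : Fin v, ∑ b : Fin v, (colPairCount T a b : ℚ)
      = (c : ℚ) * ((r : ℚ) * (r : ℚ)) := by
    simp only [hL]
    rw [twofold (fun (a : Fin v) (j : Fin c) => χ j a)]
    rw [Finset.sum_congr rfl (fun j (_ : j ∈ Finset.univ) => by rw [hrw j])]
    rw [Finset.sum_const, Finset.card_univ, Fintype.card_fin, nsmul_eq_mul]
  have D4 : ∑ a : Fin v, (colPairCount T a a : ℚ) = (c : ℚ) * (r : ℚ) := by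
    rw [Finset.sum_congr rfl (fun a (_ : a ∈ Finset.univ) => by
      rw [hL, Finset.sum_congr rfl (fun j _ => hid j a)])]
    exact hM
  have S4 := split_diag (fun a b : Fin v => (colPairCount T a b : ℚ))
  have P2 := pair_split (fun a b : Fin v => (colPairCount T a b : ℚ))
    (fun a b => by simp only [colPairCount_symm T a b])
  have : (2 : ℚ) * ∑ q ∈ Finset.univ.filter (fun q : Fin v × Fin v => q.1 < q.2),
      (colPairCount T q.1 q.2 : ℚ) = (c : ℚ) * ((r : ℚ) * (r : ℚ)) - (c : ℚ) * (r : ℚ) := by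
    rw [← P2]; linarith [S4, C3, D4]
  linarith

end Design


lemma cast_half (n : ℕ) (hn : 1 ≤ n) :
    ((n * (n - 1) / 2 : ℕ) : ℚ) = (n : ℚ) * ((n : ℚ) - 1) / 2 := by
  have h2 : 2 ∣ n * (n - 1) := by
    rcases Nat.even_or_odd n with h | h
    · exact Dvd.dvd.mul_right h.two_dvd _
    · exact Dvd.dvd.mul_left (Nat.Odd.sub_odd h odd_one).two_dvd _
  rw [Nat.cast_div h2 (by norm_num)]
  push_cast [Nat.cast_sub hn]
  ring

/-- For an `(r × c, v)`-near triple array with `μ_c = e(r−1)/(v−1)`,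
`S(c(c−1)/2, λ_cc) ≥ S(v(v−1)/2, μ_c)`, with equality iff every pair of distinct
symbols is covered by `⌊μ_c⌋` or `⌈μ_c⌉` columns. -/
theorem nearTripleArray_column_design_bound {r c v : ℕ} (hr : 2 ≤ r) (hc : 2 ≤ c)
    (hv0 : 2 ≤ v) (hv1 : max r c ≤ v) (hv2 : v ≤ r * c)
    (T : Fin r × Fin c → Fin v) (hT : IsNearTripleArray T)
    (μc : ℚ) (hμ : μc = avgRepl r c v * ((r : ℚ) - 1) / ((v : ℚ) - 1)) :
    Sfun (v * (v - 1) / 2) μc ≤ Sfun (c * (c - 1) / 2) (lamCC T) ∧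
    (Sfun (c * (c - 1) / 2) (lamCC T) = Sfun (v * (v - 1) / 2) μc ↔
      ∀ a b : Fin v, a ≠ b →
        (colPairCount T a b : ℤ) = ⌊μc⌋ ∨ (colPairCount T a b : ℤ) = ⌈μc⌉) := by
  obtain ⟨hbin, _, _, _, hcc⟩ := hT
  have hvQ : (v : ℚ) ≠ 0 := by
    have : (2 : ℚ) ≤ (v : ℚ) := by exact_mod_cast hv0
    linarith
  have hv1Q : (v : ℚ) - 1 ≠ 0 := by
    have : (2 : ℚ) ≤ (v : ℚ) := by exact_mod_cast hv0
    intro h; linarith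
  have hcQ : (c : ℚ) * ((c : ℚ) - 1) / 2 ≠ 0 := by
    have : (2 : ℚ) ≤ (c : ℚ) := by exact_mod_cast hc
    intro h; nlinarith
  set Pc := Finset.univ.filter (fun p : Fin c × Fin c => p.1 < p.2) with hPc
  set Pv := Finset.univ.filter (fun q : Fin v × Fin v => q.1 < q.2) with hPv
  have hPcCard : (Pc.card : ℚ) = (c : ℚ) * ((c : ℚ) - 1) / 2 := by
    rw [hPc, pair_card, cast_half c (by omega)]
  have hPvCard : (Pv.card : ℚ) = (v : ℚ) * ((v : ℚ) - 1) / 2 := by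
    rw [hPv, pair_card, cast_half v (by omega)]
  -- F3 : sum over column pairs of intersections
  have F3 : ∑ p ∈ Pc, (((colSet T p.1 ∩ colSet T p.2).card : ℕ) : ℚ)
      = (Pc.card : ℚ) * lamCC T := by
    rw [hPcCard, lamCC, mul_comm, div_mul_cancel₀ _ hcQ]
  have F4 : ∑ q ∈ Pv, ((colPairCount T q.1 q.2 : ℕ) : ℚ) = (Pv.card : ℚ) * μc := by
    rw [bigSum T hbin, hPvCard, hμ, avgRepl]
    field_simp
  have SLc := Slemma Pc (fun p => (colSet T p.1 ∩ colSet T p.2).card) (lamCC T) F3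
  have SLv := Slemma Pv (fun q => colPairCount T q.1 q.2) μc F4
  beta_reduce at SLc SLv
  have hallc : ∀ p ∈ Pc, (((colSet T p.1 ∩ colSet T p.2).card : ℕ) : ℤ) = ⌊lamCC T⌋ ∨
      (((colSet T p.1 ∩ colSet T p.2).card : ℕ) : ℤ) = ⌈lamCC T⌉ := by
    intro p hp
    rw [hPc, Finset.mem_filter] at hp
    exact hcc p.1 p.2 (ne_of_lt hp.2)
  have hEc : ∑ p ∈ Pc, (((colSet T p.1 ∩ colSet T p.2).card : ℚ)
      * (((colSet T p.1 ∩ colSet T p.2).card : ℚ) - 1) / 2) = Sfun Pc.card (lamCC T) :=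
    SLc.2.mpr hallc
  have F5 : ∑ p ∈ Pc, (((colSet T p.1 ∩ colSet T p.2).card : ℚ)
        * (((colSet T p.1 ∩ colSet T p.2).card : ℚ) - 1) / 2)
      = ∑ q ∈ Pv, ((colPairCount T q.1 q.2 : ℚ) * ((colPairCount T q.1 q.2 : ℚ) - 1) / 2) := by
    rw [← Finset.sum_div, ← Finset.sum_div, bigE T hbin]
  have hSc : Sfun (c * (c - 1) / 2) (lamCC T)
      = ∑ q ∈ Pv, ((colPairCount T q.1 q.2 : ℚ) * ((colPairCount T q.1 q.2 : ℚ) - 1) / 2) := by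
    rw [← F5, hEc, hPc, pair_card]
  have hSv : Sfun (v * (v - 1) / 2) μc = Sfun Pv.card μc := by
    rw [hPv, pair_card]
  constructor
  · rw [hSc, hSv]
    exact SLv.1
  · rw [hSc, hSv, SLv.2]
    constructor
    · intro h a b hab
      rcases lt_trichotomy a b with hlt | heq | hgt
      · exact h (a, b) (by rw [hPv, Finset.mem_filter]; exact ⟨Finset.mem_univ _, hlt⟩)
      · exact absurd heq hab
      · have := h (b, a) (by rw [hPv, Finset.mem_filter]; exact ⟨Finset.mem_univ _, hgt⟩)
        simpa [colPairCount_symm T a b] using this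
    · intro h q hq
      rw [hPv, Finset.mem_filter] at hq
      exact h q.1 q.2 (ne_of_lt hq.2)
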